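/- For every ε > 0 and every natural number r ≥ 1, Σ_{i=1}^{r-1} (r - i)·(1+ε)^i·r^i / (r · i! · e^{(1+ε)r}) ≤ (1+ε)^{r-1}·r^r / ((r-1)!·e^{(1+ε)r}). -/

import Mathlib

theorem tail_sum_bound (ε : ℝ) (hε : 0 < ε) (r : ℕ) (hr : 1 ≤ r) :
    ∑ i ∈ Finset.Ico 1 r,
        ((r : ℝ) - i) * (1 + ε) ^ i * (r : ℝ) ^ i
          / ((r : ℝ) * (Nat.factorial i) * Real.exp ((1 + ε) * r))
      ≤ (1 + ε) ^ (r - 1) * (r : ℝ) ^ r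
          / ((Nat.factorial (r - 1)) * Real.exp ((1 + ε) * r)) := by
  set E := Real.exp ((1 + ε) * r) with hE
  have hEpos : 0 < E := Real.exp_pos _
  have hrpos : (0:ℝ) < r := by exact_mod_cast hr
  set F : ℕ → ℝ := fun i => (r:ℝ)^i / (Nat.factorial i) with hF
  have hFnonneg : ∀ i, 0 ≤ F i := fun i => div_nonneg (pow_nonneg hrpos.le _) (by positivity)
  set c := (1 + ε)^(r-1) / E with hc
  have hcpos : 0 < c := by positivity
  have key : ∀ i ∈ Finset.Ico 1 r,
      ((r : ℝ) - i) * (1 + ε) ^ i * (r : ℝ) ^ i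
        / ((r : ℝ) * (Nat.factorial i) * E) ≤ c * (F i - F (i-1)) := by
    intro i hi
    obtain ⟨hi1, hir⟩ := Finset.mem_Ico.mp hi
    have hiR : (i:ℝ) ≤ r := by exact_mod_cast hir.le
    obtain ⟨j, rfl⟩ : ∃ j, i = j + 1 := ⟨i - 1, (Nat.succ_pred_eq_of_pos hi1).symm⟩
    have hfac : (0:ℝ) < (Nat.factorial (j+1)) := by exact_mod_cast (j+1).factorial_pos
    have hfacj : (0:ℝ) < (Nat.factorial j) := by exact_mod_cast j.factorial_pos
    have hdiff : F (j+1) - F (j+1-1)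
        = ((r:ℝ) - (j+1)) * (r:ℝ)^(j+1) / ((r:ℝ) * (Nat.factorial (j+1))) := by
      simp only [hF, Nat.add_sub_cancel]
      have hf : ((Nat.factorial (j+1)):ℝ) = ((j:ℝ)+1) * (Nat.factorial j) := by
        push_cast [Nat.factorial_succ]; ring
      rw [hf]
      field_simp
      ring
    have hterm : ((r : ℝ) - (j+1)) * (1 + ε) ^ (j+1) * (r : ℝ) ^ (j+1)
        / ((r : ℝ) * (Nat.factorial (j+1)) * E)
        = (F (j+1) - F (j+1-1)) * (1 + ε) ^ (j+1) / E := by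
      rw [hdiff]; field_simp
    have hdnn : 0 ≤ F (j+1) - F (j+1-1) := by
      rw [hdiff]
      have hrj : (j:ℝ) + 1 < r := by exact_mod_cast hir
      apply div_nonneg (mul_nonneg (by linarith) (by positivity)) (by positivity)
    push_cast
    rw [hterm]
    have hpow : (1 + ε) ^ (j+1) ≤ (1 + ε) ^ (r-1) := by
      apply pow_le_pow_right₀ (by linarith)
      omega
    calc (F (j+1) - F (j+1-1)) * (1 + ε) ^ (j+1) / E
        ≤ (F (j+1) - F (j+1-1)) * (1 + ε) ^ (r-1) / E := by gcongr
      _ = c * (F (j+1) - F (j+1-1)) := by rw [hc]; ring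
  calc ∑ i ∈ Finset.Ico 1 r,
        ((r : ℝ) - i) * (1 + ε) ^ i * (r : ℝ) ^ i
          / ((r : ℝ) * (Nat.factorial i) * E)
      ≤ ∑ i ∈ Finset.Ico 1 r, c * (F i - F (i-1)) := Finset.sum_le_sum key
    _ = c * ∑ i ∈ Finset.Ico 1 r, (F i - F (i-1)) := by rw [Finset.mul_sum]
    _ = c * (F (r-1) - F 0) := by
        congr 1
        rw [Finset.sum_Ico_eq_sum_range]
        rw [← Finset.sum_range_sub F (r-1)]
        apply Finset.sum_congr rfl
        intro i _
        simp only [show 1+i = i+1 from by omega, Nat.add_sub_cancel]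
    _ ≤ c * ((r:ℝ) * F (r-1)) := by
        apply mul_le_mul_of_nonneg_left _ hcpos.le
        have h0 : F 0 = 1 := by simp [hF]
        have h1 := hFnonneg (r-1)
        have hr1 : (1:ℝ) ≤ r := by exact_mod_cast hr
        nlinarith [mul_nonneg (by linarith : (0:ℝ) ≤ (r:ℝ)-1) h1]
    _ = (1 + ε) ^ (r - 1) * (r : ℝ) ^ r / ((Nat.factorial (r - 1)) * E) := by
        have hrr : (r:ℝ)^r = (r:ℝ)^(r-1) * r := by
          rw [← pow_succ]; congr 1; omega
        have hfac : (0:ℝ) < (Nat.factorial (r-1)) := by exact_mod_cast (r-1).factorial_pos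
        simp only [hc, hF]
        rw [hrr]
        field_simp
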